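/- The map F(z,w) = (F₁(z,w), F₂(z,w)) with F₁(z,w) = z·exp(z e^{2w+z}) and F₂(z,w) = [w + z/2 − (z/2)e^{2w+z} + (z²/2)exp(2z e^{2w+z}) − (3z³/4)exp(3z e^{2w+z})]·exp(z exp(z e^{2w+z}) + (z²/2)exp(2z e^{2w+z})) is an automorphism of ℂ² tangent to the identity at the origin, satisfying F(0,w) = (0,w) for all w ∈ ℂ. -/

import Mathlib

open Complex

/-- The automorphism `F = (F₁, F₂)` built from shears and overshears. -/
noncomputable def Fauto : ℂ × ℂ → ℂ × ℂ := fun p =>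
  let z := p.1; let w := p.2
  (z * Complex.exp (z * Complex.exp (2 * w + z)),
   (w + z / 2 - z / 2 * Complex.exp (2 * w + z)
      + z ^ 2 / 2 * Complex.exp (2 * z * Complex.exp (2 * w + z))
      - 3 * z ^ 3 / 4 * Complex.exp (3 * z * Complex.exp (2 * w + z))) *
     Complex.exp (z * Complex.exp (z * Complex.exp (2 * w + z))
      + z ^ 2 / 2 * Complex.exp (2 * z * Complex.exp (2 * w + z))))

/-- An explicit inverse of `Fauto`. -/
noncomputable def Ginv : ℂ × ℂ → ℂ × ℂ := fun p =>
  let Z := p.1; let W := p.2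
  let V := W * Complex.exp (-(Z + Z ^ 2 / 2)) - Z ^ 2 / 2 + 3 * Z ^ 3 / 4
  let T := Z * Complex.exp (2 * V)
  let z := Z * Complex.exp (-T)
  (z, V - z / 2 + T / 2)

lemma exp_two_mul' (x : ℂ) : Complex.exp (2 * x) = Complex.exp x ^ 2 := by
  rw [sq, ← Complex.exp_add]; ring_nf

lemma exp_three_mul' (x : ℂ) : Complex.exp (3 * x) = Complex.exp x ^ 3 := by
  rw [pow_succ, ← exp_two_mul', ← Complex.exp_add]; ring_nf

lemma Fauto_eq (z w : ℂ) :
    Fauto (z, w) =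
      (z * Complex.exp (z * Complex.exp (2 * w + z)),
       (w + z / 2 - (z * Complex.exp (2 * w + z)) / 2
          + (z * Complex.exp (z * Complex.exp (2 * w + z))) ^ 2 / 2
          - 3 * (z * Complex.exp (z * Complex.exp (2 * w + z))) ^ 3 / 4) *
        Complex.exp (z * Complex.exp (z * Complex.exp (2 * w + z))
          + (z * Complex.exp (z * Complex.exp (2 * w + z))) ^ 2 / 2)) := by
  simp only [Fauto]
  have h2 : (2 : ℂ) * z * Complex.exp (2 * w + z) = 2 * (z * Complex.exp (2 * w + z)) := by ring
  have h3 : (3 : ℂ) * z * Complex.exp (2 * w + z) = 3 * (z * Complex.exp (2 * w + z)) := by ring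
  rw [h2, h3, exp_two_mul', exp_three_mul', Prod.mk.injEq]
  exact ⟨by ring, by ring⟩

lemma Ginv_Fauto (z w : ℂ) : Ginv (Fauto (z, w)) = (z, w) := by
  rw [Fauto_eq]
  simp only [Ginv]
  set E := Complex.exp (2 * w + z) with hE
  set T := z * E with hT
  set eT := Complex.exp T with heT
  set Z := z * eT with hZ
  have heT0 : eT ≠ 0 := heT ▸ Complex.exp_ne_zero T
  have hexp : Complex.exp (Z + Z ^ 2 / 2) * Complex.exp (-(Z + Z ^ 2 / 2)) = 1 := by
    rw [← Complex.exp_add, show Z + Z ^ 2 / 2 + -(Z + Z ^ 2 / 2) = 0 by ring, Complex.exp_zero]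
  have hV : (w + z / 2 - T / 2 + Z ^ 2 / 2 - 3 * Z ^ 3 / 4) *
      Complex.exp (Z + Z ^ 2 / 2) * Complex.exp (-(Z + Z ^ 2 / 2)) - Z ^ 2 / 2 + 3 * Z ^ 3 / 4
      = w + z / 2 - T / 2 := by
    rw [mul_assoc, hexp]; ring
  rw [hV]
  have hT' : Z * Complex.exp (2 * (w + z / 2 - T / 2)) = T := by
    rw [show 2 * (w + z / 2 - T / 2) = (2 * w + z) + (-T) by ring, Complex.exp_add, ← hE,
      Complex.exp_neg, ← heT, hZ, hT]
    field_simp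
  rw [hT']
  have hz : Z * Complex.exp (-T) = z := by
    rw [Complex.exp_neg, ← heT, hZ]
    field_simp
  rw [hz, Prod.mk.injEq]
  exact ⟨rfl, by ring⟩

lemma Fauto_Ginv (Z W : ℂ) : Fauto (Ginv (Z, W)) = (Z, W) := by
  simp only [Ginv]
  set V := W * Complex.exp (-(Z + Z ^ 2 / 2)) - Z ^ 2 / 2 + 3 * Z ^ 3 / 4 with hV
  set T := Z * Complex.exp (2 * V) with hT
  set z := Z * Complex.exp (-T) with hz
  rw [Fauto_eq]
  rw [show 2 * (V - z / 2 + T / 2) + z = 2 * V + T by ring]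
  have h1 : z * Complex.exp (2 * V + T) = T := by
    rw [Complex.exp_add, hz, Complex.exp_neg]
    rw [hT]
    field_simp
  rw [h1]
  have h2 : z * Complex.exp T = Z := by
    rw [hz, Complex.exp_neg]
    field_simp
  rw [h2]
  rw [Prod.mk.injEq]
  refine ⟨rfl, ?_⟩
  rw [show V - z / 2 + T / 2 + z / 2 - T / 2 + Z ^ 2 / 2 - 3 * Z ^ 3 / 4
      = V + Z ^ 2 / 2 - 3 * Z ^ 3 / 4 by ring, hV, Complex.exp_neg]
  rw [show W * (Complex.exp (Z + Z ^ 2 / 2))⁻¹ - Z ^ 2 / 2 + 3 * Z ^ 3 / 4 + Z ^ 2 / 2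
      - 3 * Z ^ 3 / 4 = W * (Complex.exp (Z + Z ^ 2 / 2))⁻¹ by ring,
    mul_assoc, inv_mul_cancel₀ (Complex.exp_ne_zero _), mul_one]

lemma Fauto_bijective : Function.Bijective Fauto := by
  refine Function.bijective_iff_has_inverse.mpr ⟨Ginv, fun p => ?_, fun p => ?_⟩
  · obtain ⟨z, w⟩ := p; exact Ginv_Fauto z w
  · obtain ⟨Z, W⟩ := p; exact Fauto_Ginv Z W

lemma hasFDerivAt_comp1 :
    HasFDerivAt (fun p : ℂ × ℂ => p.1 * Complex.exp (p.1 * Complex.exp (2 * p.2 + p.1)))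
      (ContinuousLinearMap.fst ℂ ℂ ℂ) ((0 : ℂ), (0 : ℂ)) := by
  have hE := (((hasFDerivAt_snd (𝕜 := ℂ) (p := ((0:ℂ),(0:ℂ)))).const_mul (2:ℂ)).add
      (hasFDerivAt_fst)).cexp
  have hT := (hasFDerivAt_fst (𝕜 := ℂ) (p := ((0:ℂ),(0:ℂ)))).mul hE
  have h1 := (hasFDerivAt_fst (𝕜 := ℂ) (p := ((0:ℂ),(0:ℂ)))).mul hT.cexp
  convert h1 using 1
  all_goals ext v <;> simp

lemma hasFDerivAt_comp2' :
    HasFDerivAt (fun p : ℂ × ℂ =>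
      (p.2 + 2⁻¹ * p.1 - 2⁻¹ * p.1 * Complex.exp (2 * p.2 + p.1)
        + 2⁻¹ * (p.1 * p.1) * Complex.exp (2 * p.1 * Complex.exp (2 * p.2 + p.1))
        - 3 / 4 * (p.1 * (p.1 * p.1)) * Complex.exp (3 * p.1 * Complex.exp (2 * p.2 + p.1))) *
      Complex.exp (p.1 * Complex.exp (p.1 * Complex.exp (2 * p.2 + p.1))
        + 2⁻¹ * (p.1 * p.1) * Complex.exp (2 * p.1 * Complex.exp (2 * p.2 + p.1))))
    (ContinuousLinearMap.snd ℂ ℂ ℂ) ((0 : ℂ), (0 : ℂ)) := by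
  have hfst := hasFDerivAt_fst (𝕜 := ℂ) (p := ((0:ℂ),(0:ℂ))) (E := ℂ) (F := ℂ)
  have hsnd := hasFDerivAt_snd (𝕜 := ℂ) (p := ((0:ℂ),(0:ℂ))) (E := ℂ) (F := ℂ)
  have hE := ((hsnd.const_mul (2:ℂ)).add hfst).cexp
  have hT := hfst.mul hE
  have h2E := ((hfst.const_mul (2:ℂ)).mul hE).cexp
  have h3E := ((hfst.const_mul (3:ℂ)).mul hE).cexp
  have hsq := hfst.mul hfst
  have hcube := hfst.mul hsq
  have hQ := (((hsnd.add (hfst.const_mul (2⁻¹:ℂ))).sub ((hfst.const_mul (2⁻¹:ℂ)).mul hE)).add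
      ((hsq.const_mul (2⁻¹:ℂ)).mul h2E)).sub
      ((hcube.const_mul ((3:ℂ)/4)).mul h3E)
  have hX := (hfst.mul hT.cexp).add ((hsq.const_mul (2⁻¹:ℂ)).mul h2E)
  have h2 := hQ.mul hX.cexp
  convert h2 using 1
  all_goals ext v <;> simp

lemma hasFDerivAt_comp2 :
    HasFDerivAt (fun p : ℂ × ℂ =>
      (p.2 + p.1 / 2 - p.1 / 2 * Complex.exp (2 * p.2 + p.1)
        + p.1 ^ 2 / 2 * Complex.exp (2 * p.1 * Complex.exp (2 * p.2 + p.1))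
        - 3 * p.1 ^ 3 / 4 * Complex.exp (3 * p.1 * Complex.exp (2 * p.2 + p.1))) *
      Complex.exp (p.1 * Complex.exp (p.1 * Complex.exp (2 * p.2 + p.1))
        + p.1 ^ 2 / 2 * Complex.exp (2 * p.1 * Complex.exp (2 * p.2 + p.1))))
    (ContinuousLinearMap.snd ℂ ℂ ℂ) ((0 : ℂ), (0 : ℂ)) := by
  have heq : (fun p : ℂ × ℂ =>
      (p.2 + p.1 / 2 - p.1 / 2 * Complex.exp (2 * p.2 + p.1)
        + p.1 ^ 2 / 2 * Complex.exp (2 * p.1 * Complex.exp (2 * p.2 + p.1))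
        - 3 * p.1 ^ 3 / 4 * Complex.exp (3 * p.1 * Complex.exp (2 * p.2 + p.1))) *
      Complex.exp (p.1 * Complex.exp (p.1 * Complex.exp (2 * p.2 + p.1))
        + p.1 ^ 2 / 2 * Complex.exp (2 * p.1 * Complex.exp (2 * p.2 + p.1)))) =
      (fun p : ℂ × ℂ =>
      (p.2 + 2⁻¹ * p.1 - 2⁻¹ * p.1 * Complex.exp (2 * p.2 + p.1)
        + 2⁻¹ * (p.1 * p.1) * Complex.exp (2 * p.1 * Complex.exp (2 * p.2 + p.1))
        - 3 / 4 * (p.1 * (p.1 * p.1)) * Complex.exp (3 * p.1 * Complex.exp (2 * p.2 + p.1))) *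
      Complex.exp (p.1 * Complex.exp (p.1 * Complex.exp (2 * p.2 + p.1))
        + 2⁻¹ * (p.1 * p.1) * Complex.exp (2 * p.1 * Complex.exp (2 * p.2 + p.1)))) := by
    funext p
    rw [show p.1 ^ 2 / 2 = 2⁻¹ * (p.1 * p.1) by ring,
      show 3 * p.1 ^ 3 / 4 = 3 / 4 * (p.1 * (p.1 * p.1)) by ring,
      show p.1 / 2 = 2⁻¹ * p.1 by ring]
  rw [heq]
  exact hasFDerivAt_comp2'

lemma hasFDerivAt_Fauto :
    HasFDerivAt Fauto (ContinuousLinearMap.id ℂ (ℂ × ℂ)) ((0 : ℂ), (0 : ℂ)) := by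
  have h := HasFDerivAt.prodMk hasFDerivAt_comp1 hasFDerivAt_comp2
  have hfun : Fauto = fun p : ℂ × ℂ =>
      (p.1 * Complex.exp (p.1 * Complex.exp (2 * p.2 + p.1)),
       (p.2 + p.1 / 2 - p.1 / 2 * Complex.exp (2 * p.2 + p.1)
        + p.1 ^ 2 / 2 * Complex.exp (2 * p.1 * Complex.exp (2 * p.2 + p.1))
        - 3 * p.1 ^ 3 / 4 * Complex.exp (3 * p.1 * Complex.exp (2 * p.2 + p.1))) *
      Complex.exp (p.1 * Complex.exp (p.1 * Complex.exp (2 * p.2 + p.1))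
        + p.1 ^ 2 / 2 * Complex.exp (2 * p.1 * Complex.exp (2 * p.2 + p.1)))) := rfl
  rw [hfun]
  rw [ContinuousLinearMap.fst_prod_snd] at h
  exact h

/-- `F` is an automorphism of `ℂ²`, tangent to the identity at the origin,
fixing the `w`-axis pointwise. -/
theorem Fauto_properties :
    Function.Bijective Fauto ∧ Fauto (0, 0) = (0, 0) ∧
    HasFDerivAt Fauto (ContinuousLinearMap.id ℂ (ℂ × ℂ)) (0, 0) ∧
    ∀ w : ℂ, Fauto (0, w) = (0, w) := by
  exact ⟨Fauto_bijective, by simp [Fauto], hasFDerivAt_Fauto, fun w => by simp [Fauto]⟩
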